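/- Let f be L-smooth convex with minimizer x_⋆ and x₀ ∈ ℝ^d. Suppose z is an auxiliary vector for x with pre-rate τ > 0, i.e., f(x)⁺ − f(x_⋆) + (L/(2τ))‖z−x_⋆‖² ≤ (L/(2τ))‖x₀−x_⋆‖². Let δ = 1 + √(1+2τ), τ' = τ + δ, x' = (τ/τ')x⁺ + (δ/τ')z, and z' = z − (δ/L)∇f(x'). Then z' is an auxiliary vector for x' with pre-rate τ', i.e., f(x')⁺ − f(x_⋆) + (L/(2τ'))‖z'−x_⋆‖² ≤ (L/(2τ'))‖x₀−x_⋆‖². -/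

import Mathlib

open Set InnerProductSpace

local notation "⟪" x ", " y "⟫" => @inner ℝ _ _ x y

variable {d : ℕ}

lemma ogm_line_deriv (f : EuclideanSpace ℝ (Fin d) → ℝ)
    (f' : EuclideanSpace ℝ (Fin d) → EuclideanSpace ℝ (Fin d))
    (hdiff : ∀ y, HasGradientAt f (f' y) y)
    (y dd : EuclideanSpace ℝ (Fin d)) (t : ℝ) :
    HasDerivAt (fun s : ℝ => f (y + s • dd)) ⟪f' (y + t • dd), dd⟫ t := by
  have h1 : HasDerivAt (fun s : ℝ => y + s • dd) dd t := by
    simpa using ((hasDerivAt_id t).smul_const dd).const_add y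
  have h2 := ((hdiff (y + t • dd)).hasFDerivAt.comp_hasDerivAt t h1)
  exact h2

lemma ogm_grad_ineq (f : EuclideanSpace ℝ (Fin d) → ℝ)
    (f' : EuclideanSpace ℝ (Fin d) → EuclideanSpace ℝ (Fin d))
    (hconv : ConvexOn ℝ Set.univ f)
    (hdiff : ∀ y, HasGradientAt f (f' y) y)
    (u y : EuclideanSpace ℝ (Fin d)) :
    f u + ⟪f' u, y - u⟫ ≤ f y := by
  set φ : ℝ → ℝ := fun t => f (u + t • (y - u)) with hφ
  have hφconv : ConvexOn ℝ Set.univ φ := by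
    have := hconv.comp_affineMap (AffineMap.lineMap u y)
    simp only [Set.preimage_univ] at this
    refine (show φ = f ∘ AffineMap.lineMap u y from ?_) ▸ this
    funext t
    simp [φ, Function.comp, AffineMap.lineMap_apply]
    congr 1
    module
  have hder : HasDerivAt φ ⟪f' u, y - u⟫ 0 := by
    have := ogm_line_deriv f f' hdiff u (y - u) 0
    simpa using this
  have hslope := hφconv.le_slope_of_hasDerivAt (mem_univ (0:ℝ)) (mem_univ (1:ℝ))
    one_pos hder
  have : slope φ 0 1 = f y - f u := by
    simp [slope_def_field, φ]
  linarith [hslope, this.le, this.ge]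

lemma ogm_descent (L : ℝ) (hL : 0 < L) (f : EuclideanSpace ℝ (Fin d) → ℝ)
    (f' : EuclideanSpace ℝ (Fin d) → EuclideanSpace ℝ (Fin d))
    (hdiff : ∀ y, HasGradientAt f (f' y) y)
    (hsmooth : ∀ y w, ‖f' y - f' w‖ ≤ L * ‖y - w‖)
    (y w : EuclideanSpace ℝ (Fin d)) :
    f w ≤ f y + ⟪f' y, w - y⟫ + L / 2 * ‖w - y‖ ^ 2 := by
  set dd := w - y with hdd
  set φ : ℝ → ℝ := fun t => f (y + t • dd) - t * ⟪f' y, dd⟫ - L / 2 * t ^ 2 * ‖dd‖ ^ 2 with hφ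
  have hder : ∀ t : ℝ, HasDerivAt φ
      (⟪f' (y + t • dd), dd⟫ - ⟪f' y, dd⟫ - L * t * ‖dd‖ ^ 2) t := by
    intro t
    have h1 := ogm_line_deriv f f' hdiff y dd t
    have h2 : HasDerivAt (fun t : ℝ => t * ⟪f' y, dd⟫) ⟪f' y, dd⟫ t := by
      simpa using (hasDerivAt_id t).mul_const ⟪f' y, dd⟫
    have h3 : HasDerivAt (fun t : ℝ => L / 2 * t ^ 2 * ‖dd‖ ^ 2)
        (L * t * ‖dd‖ ^ 2) t := by
      have := ((hasDerivAt_pow 2 t).const_mul (L / 2)).mul_const (‖dd‖ ^ 2)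
      exact this.congr_deriv (by rw [show (2:ℕ) - 1 = 1 from rfl, pow_one]; push_cast; ring)
    exact (h1.sub h2).sub h3
  have hmono : AntitoneOn φ (Icc 0 1) := by
    apply antitoneOn_of_deriv_nonpos (convex_Icc 0 1)
    · exact fun t _ => ((hder t).continuousAt).continuousWithinAt
    · exact fun t _ => ((hder t).differentiableAt).differentiableWithinAt
    · intro t ht
      rw [interior_Icc] at ht
      rw [(hder t).deriv]
      have hip : ⟪f' (y + t • dd) - f' y, dd⟫ ≤ ‖f' (y + t • dd) - f' y‖ * ‖dd‖ :=
        real_inner_le_norm _ _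
      have hs : ‖f' (y + t • dd) - f' y‖ ≤ L * (t * ‖dd‖) := by
        have := hsmooth (y + t • dd) y
        simpa [norm_smul, abs_of_pos ht.1] using this
      have h1 : ⟪f' (y + t • dd), dd⟫ - ⟪f' y, dd⟫ = ⟪f' (y + t • dd) - f' y, dd⟫ := by
        rw [inner_sub_left]
      have hnn : (0:ℝ) ≤ ‖dd‖ := norm_nonneg _
      nlinarith [mul_le_mul_of_nonneg_right hs hnn]
  have h01 := hmono (left_mem_Icc.mpr zero_le_one) (right_mem_Icc.mpr zero_le_one) zero_le_one
  have h0 : φ 0 = f y := by simp [φ]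
  have hyd : y + dd = w := by rw [hdd]; abel
  have h1 : φ 1 = f w - ⟪f' y, dd⟫ - L / 2 * ‖dd‖ ^ 2 := by
    simp [φ, hyd]
  rw [h0, h1] at h01
  linarith

lemma ogm_cocoercive (L : ℝ) (hL : 0 < L) (f : EuclideanSpace ℝ (Fin d) → ℝ)
    (f' : EuclideanSpace ℝ (Fin d) → EuclideanSpace ℝ (Fin d))
    (hconv : ConvexOn ℝ Set.univ f)
    (hdiff : ∀ y, HasGradientAt f (f' y) y)
    (hsmooth : ∀ y w, ‖f' y - f' w‖ ≤ L * ‖y - w‖)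
    (u v : EuclideanSpace ℝ (Fin d)) :
    2 * L * f u + 2 * L * ⟪f' u, v - u⟫ + ‖f' v - f' u‖ ^ 2 ≤ 2 * L * f v := by
  set g := f' v - f' u with hg
  set ww := v - (1 / L) • g with hww
  have h1 := ogm_grad_ineq f f' hconv hdiff u ww
  have h2 := ogm_descent L hL f f' hdiff hsmooth v ww
  have e1 : ⟪f' u, ww - u⟫ = ⟪f' u, v - u⟫ - (1 / L) * ⟪f' u, g⟫ := by
    rw [hww, show v - (1 / L) • g - u = (v - u) - (1/L) • g by abel]
    rw [inner_sub_right, real_inner_smul_right]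
  have e2 : ⟪f' v, ww - v⟫ = -((1 / L) * ⟪f' v, g⟫) := by
    rw [hww, show v - (1 / L) • g - v = -((1/L) • g) by abel]
    rw [inner_neg_right, real_inner_smul_right]
  have e3 : ‖ww - v‖ ^ 2 = (1 / L) ^ 2 * ‖g‖ ^ 2 := by
    rw [hww, show v - (1 / L) • g - v = -((1/L) • g) by abel]
    rw [norm_neg, norm_smul]
    rw [mul_pow, Real.norm_eq_abs, sq_abs]
  have e4 : ⟪f' v, g⟫ - ⟪f' u, g⟫ = ‖g‖ ^ 2 := by
    rw [← inner_sub_left, ← hg, real_inner_self_eq_norm_sq]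
  rw [e1] at h1
  rw [e2, e3] at h2
  have hL' : L ≠ 0 := ne_of_gt hL
  have key : f u + ⟪f' u, v - u⟫ + 1 / (2 * L) * ‖g‖ ^ 2 ≤ f v := by
    have c1 : L / 2 * ((1/L)^2 * ‖g‖^2) = 1 / (2*L) * ‖g‖^2 := by field_simp
    have c5 : 1 / L * ⟪f' v, g⟫ - 1 / L * ⟪f' u, g⟫ = 1 / L * ‖g‖ ^ 2 := by
      rw [← mul_sub, e4]
    have c6 : 1 / L * ‖g‖ ^ 2 = 2 * (1 / (2 * L) * ‖g‖ ^ 2) := by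
      field_simp
    linarith [h1, h2, c1, c5, c6]
  have := mul_le_mul_of_nonneg_left key (by positivity : (0:ℝ) ≤ 2 * L)
  have c2 : 2 * L * (1 / (2 * L) * ‖g‖ ^ 2) = ‖g‖ ^ 2 := by field_simp
  linarith [this, c2]

theorem ogm_induction_prerate {d : ℕ} (L : ℝ) (hL : 0 < L)
    (f : EuclideanSpace ℝ (Fin d) → ℝ)
    (f' : EuclideanSpace ℝ (Fin d) → EuclideanSpace ℝ (Fin d))
    (hconv : ConvexOn ℝ Set.univ f)
    (hdiff : ∀ y, HasGradientAt f (f' y) y)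
    (hsmooth : ∀ y w, ‖f' y - f' w‖ ≤ L * ‖y - w‖)
    (xstar : EuclideanSpace ℝ (Fin d)) (hmin : ∀ y, f xstar ≤ f y)
    (x₀ x z : EuclideanSpace ℝ (Fin d)) (τ : ℝ) (hτ : 0 < τ)
    (haux : (f x - (1 / (2 * L)) * ‖f' x‖ ^ 2) - f xstar
              + L / (2 * τ) * ‖z - xstar‖ ^ 2 ≤ L / (2 * τ) * ‖x₀ - xstar‖ ^ 2)
    (δ τ' : ℝ) (hδ : δ = 1 + Real.sqrt (1 + 2 * τ)) (hτ' : τ' = τ + δ)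
    (x' z' : EuclideanSpace ℝ (Fin d))
    (hx' : x' = (τ / τ') • (x - (1 / L) • f' x) + (δ / τ') • z)
    (hz' : z' = z - (δ / L) • f' x') :
    (f x' - (1 / (2 * L)) * ‖f' x'‖ ^ 2) - f xstar
        + L / (2 * τ') * ‖z' - xstar‖ ^ 2 ≤ L / (2 * τ') * ‖x₀ - xstar‖ ^ 2 := by
  have hLne : L ≠ 0 := ne_of_gt hL
  have hτne : τ ≠ 0 := ne_of_gt hτ
  have hδpos : 0 < δ := by
    rw [hδ]; positivity
  have hτ'pos : 0 < τ' := by rw [hτ']; linarith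
  have hτ'ne : τ' ≠ 0 := ne_of_gt hτ'pos
  have hδ2 : δ ^ 2 = 2 * τ' := by
    have hs : Real.sqrt (1 + 2 * τ) ^ 2 = 1 + 2 * τ := Real.sq_sqrt (by linarith)
    rw [hδ, hτ', hδ]
    nlinarith [hs]
  set g := f' x' with hg
  set gx := f' x with hgx
  -- gradient at the minimizer is zero
  have hstar : f' xstar = 0 := by
    have hloc : IsLocalMin f xstar := Filter.Eventually.of_forall hmin
    have h0 := hloc.hasFDerivAt_eq_zero (hdiff xstar).hasFDerivAt
    have := congrArg (fun (φ : EuclideanSpace ℝ (Fin d) →L[ℝ] ℝ) =>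
      (InnerProductSpace.toDual ℝ (EuclideanSpace ℝ (Fin d))).symm φ) h0
    simpa using this
  -- two interpolation inequalities
  have hA := ogm_cocoercive L hL f f' hconv hdiff hsmooth x' x
  have hB := ogm_cocoercive L hL f f' hconv hdiff hsmooth x' xstar
  rw [hstar] at hB
  have hBn : ‖(0:EuclideanSpace ℝ (Fin d)) - g‖ ^ 2 = ‖g‖ ^ 2 := by
    rw [zero_sub, norm_neg]
  rw [hBn] at hB
  -- rewrite inner products in terms of differences from xstar
  have hax : ⟪g, x - x'⟫ = ⟪g, x - xstar⟫ - ⟪g, x' - xstar⟫ := by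
    rw [← inner_sub_right]; congr 1; abel
  have hbx : ⟪g, xstar - x'⟫ = -⟪g, x' - xstar⟫ := by
    rw [← inner_neg_right]; congr 1; abel
  have hgg : ‖gx - g‖ ^ 2 = ‖gx‖ ^ 2 - 2 * ⟪gx, g⟫ + ‖g‖ ^ 2 := norm_sub_sq_real gx g
  rw [hax, hgg] at hA
  rw [hbx] at hB
  -- the key vector identity for x'
  have hvec : (L * τ') • (x' - xstar)
      = (L * τ) • (x - xstar) - τ • gx + (L * δ) • (z - xstar) := by
    rw [hx']
    rw [smul_sub, smul_add, smul_smul, smul_smul]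
    have c1 : L * τ' * (τ / τ') = L * τ := by field_simp
    have c2 : L * τ' * (δ / τ') = L * δ := by field_simp
    rw [c1, c2, smul_sub, smul_smul]
    have c3 : L * τ * (1 / L) = τ := by field_simp
    rw [c3, hτ']
    module
  have hw2 : L * τ' * ⟪g, x' - xstar⟫
      = L * τ * ⟪g, x - xstar⟫ - τ * ⟪gx, g⟫ + L * δ * ⟪g, z - xstar⟫ := by
    have h := congrArg (fun y : EuclideanSpace ℝ (Fin d) => ⟪g, y⟫) hvec
    simp only [inner_sub_right, inner_add_right, real_inner_smul_right] at h
    simp only [inner_sub_right]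
    rw [real_inner_comm gx g] at h
    linarith [h]
  -- the key identity for z'
  have hzz : z' - xstar = (z - xstar) - (δ / L) • g := by
    rw [hz']; abel
  have expand : ‖z' - xstar‖ ^ 2
      = ‖z - xstar‖ ^ 2 - 2 * ((δ / L) * ⟪g, z - xstar⟫) + (δ / L) ^ 2 * ‖g‖ ^ 2 := by
    rw [hzz, norm_sub_sq_real, real_inner_smul_right, norm_smul, mul_pow,
      Real.norm_eq_abs, sq_abs]
    rw [show ⟪z - xstar, g⟫ = ⟪g, z - xstar⟫ from real_inner_comm _ _]
  have hsz2 : L ^ 2 * ‖z' - xstar‖ ^ 2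
      = L ^ 2 * ‖z - xstar‖ ^ 2 - 2 * L * δ * ⟪g, z - xstar⟫ + 2 * τ' * ‖g‖ ^ 2 := by
    have c : L ^ 2 * ((δ / L) ^ 2 * ‖g‖ ^ 2) = δ ^ 2 * ‖g‖ ^ 2 := by
      field_simp
    have c' : L ^ 2 * (2 * ((δ / L) * ⟪g, z - xstar⟫)) = 2 * L * δ * ⟪g, z - xstar⟫ := by
      field_simp
    rw [expand, mul_add, mul_sub, c, c', hδ2]
  -- scaled versions of the hypothesis and the two inequalities
  have hA3 := mul_le_mul_of_nonneg_left hA hτ.le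
  have hB3 := mul_le_mul_of_nonneg_left hB hδpos.le
  have haux3 := mul_le_mul_of_nonneg_left haux (by positivity : (0:ℝ) ≤ 2 * L * τ)
  have e1 : 2 * L * τ * (L / (2 * τ) * ‖z - xstar‖ ^ 2) = L ^ 2 * ‖z - xstar‖ ^ 2 := by
    field_simp
  have e2 : 2 * L * τ * (L / (2 * τ) * ‖x₀ - xstar‖ ^ 2) = L ^ 2 * ‖x₀ - xstar‖ ^ 2 := by
    field_simp
  have e3 : 2 * L * τ * (1 / (2 * L) * ‖gx‖ ^ 2) = τ * ‖gx‖ ^ 2 := by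
    field_simp
  -- the division-free main inequality
  have goal2 : 2 * L * τ' * (f x' - f xstar) - τ' * ‖g‖ ^ 2 + L ^ 2 * ‖z' - xstar‖ ^ 2
      ≤ L ^ 2 * ‖x₀ - xstar‖ ^ 2 := by
    rw [hτ'] at hw2 hsz2 ⊢
    linarith [hA3, hB3, haux3, hw2, hsz2, e1, e2, e3]
  -- conclude by dividing by 2 * L * τ'
  have hpos : (0:ℝ) ≤ 1 / (2 * L * τ') := by positivity
  have hfin := mul_le_mul_of_nonneg_left goal2 hpos
  have f1 : 1 / (2 * L * τ') * (2 * L * τ' * (f x' - f xstar)) = f x' - f xstar := by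
    field_simp
  have f2 : 1 / (2 * L * τ') * (τ' * ‖g‖ ^ 2) = 1 / (2 * L) * ‖g‖ ^ 2 := by
    field_simp
  have f3 : 1 / (2 * L * τ') * (L ^ 2 * ‖z' - xstar‖ ^ 2) = L / (2 * τ') * ‖z' - xstar‖ ^ 2 := by
    field_simp
  have f4 : 1 / (2 * L * τ') * (L ^ 2 * ‖x₀ - xstar‖ ^ 2) = L / (2 * τ') * ‖x₀ - xstar‖ ^ 2 := by
    field_simp
  linarith [hfin, f1, f2, f3, f4]
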